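/- Let V be a completely distributive quantale and (X, c) a map c : PX → V^X preserving finite joins in the first argument (c∅ = ⊥ pointwise and c(A∪B) = cA ∨ cB pointwise) and satisfying the V-closure-space axioms. Then for all A ⊆ X and x ∈ X: (cA)(x) = ⨆_{𝔵 ultrafilter on X, A ∈ 𝔵} ⨅_{B ∈ 𝔵} (cB)(x). That is, the point-set distance is recovered from the induced ultrafilter structure ℓ_c(𝔵)(x) = ⨅_{B∈𝔵}(cB)(x) via (c_{ℓ_c}A)(x) = ⨆_{𝔵 ∋ A} (ℓ_c𝔵)(x). -/

import Mathlib

/-- `p` is a coprime element of the complete lattice `V`. -/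
def CoprimeElem {V : Type*} [CompleteLattice V] (p : V) : Prop :=
  ⊥ < p ∧ ∀ u v : V, p ≤ u ⊔ v → p ≤ u ∨ p ≤ v

/-- For a completely distributive quantale `V` (every element a join of
coprimes) and a finite-join-preserving `V`-closure space structure `c` on `X`
(a `V`-approach space), the point-set distance is recovered from ultrafilter
convergence: `(cA)(x) = ⨆_{𝔵 ∋ A} ⨅_{B ∈ 𝔵} (cB)(x)`. -/
theorem approach_recovered_from_ultrafilters {V : Type*}
    [CompleteLattice V] [Monoid V] [IsQuantale V] {X : Type*}
    (hcd : ∀ v : V, v = sSup {p : V | p ≤ v ∧ CoprimeElem p})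
    (c : Set X → X → V)
    (hR : ∀ x : X, (1 : V) ≤ c {x} x)
    (hT : ∀ (𝒜 : Set (Set X)) (B : Set X) (z : X),
      (⨅ y ∈ B, ⨆ A ∈ 𝒜, c A y) * c B z ≤ c (⋃₀ 𝒜) z)
    (hbot : ∀ x : X, c ∅ x = ⊥)
    (hjoin : ∀ (A B : Set X) (x : X), c (A ∪ B) x = c A x ⊔ c B x) :
    ∀ (A : Set X) (x : X),
      c A x = ⨆ (F : Ultrafilter X) (_ : A ∈ F), ⨅ B ∈ F, c B x := by
  intro A x
  have mono : ∀ B B' : Set X, B ⊆ B' → c B x ≤ c B' x := by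
    intro B B' h
    have h1 : c (B ∪ B') x = c B x ⊔ c B' x := hjoin B B' x
    rw [Set.union_eq_self_of_subset_left h] at h1
    rw [h1]; exact le_sup_left
  apply le_antisymm
  · conv_lhs => rw [hcd (c A x)]
    refine sSup_le ?_
    rintro p ⟨hpA, hpbot, hpcop⟩
    -- key finite-union fact
    have key : ∀ 𝒯 : Set (Set X), 𝒯.Finite → (∀ B ∈ 𝒯, ¬ p ≤ c B x) →
        ¬ p ≤ c (⋃₀ 𝒯) x := by
      intro 𝒯 h𝒯
      refine Set.Finite.induction_on (motive := fun 𝒯 _ => (∀ B ∈ 𝒯, ¬ p ≤ c B x) → ¬ p ≤ c (⋃₀ 𝒯) x) 𝒯 h𝒯 ?_ ?_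
      · intro _ hle
        rw [Set.sUnion_empty, hbot] at hle
        exact absurd (le_bot_iff.mp hle) (ne_of_gt hpbot)
      · intro B s _ _ ih hmem hle
        rw [Set.sUnion_insert, hjoin] at hle
        rcases hpcop _ _ hle with h | h
        · exact hmem B (Set.mem_insert _ _) h
        · exact ih (fun B' hB' => hmem B' (Set.mem_insert_of_mem _ hB')) h
    set 𝒮 : Set (Set X) := insert A {s | ∃ B, ¬ p ≤ c B x ∧ s = Bᶜ} with h𝒮
    have hfip : ∀ t ⊆ 𝒮, t.Finite → (⋂₀ t).Nonempty := by
      intro t hts htf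
      set 𝒯 : Set (Set X) := {B | ¬ p ≤ c B x ∧ Bᶜ ∈ t} with h𝒯
      have h𝒯f : 𝒯.Finite := by
        have : 𝒯 ⊆ compl '' t := by
          rintro B ⟨_, hB⟩
          exact ⟨Bᶜ, hB, compl_compl B⟩
        exact (htf.image compl).subset this
      have hne : (A \ ⋃₀ 𝒯).Nonempty := by
        rw [Set.diff_nonempty]
        intro hsub
        exact key 𝒯 h𝒯f (fun B hB => hB.1) (hpA.trans (mono _ _ hsub))
      obtain ⟨a, haA, haU⟩ := hne
      refine ⟨a, ?_⟩
      intro s hs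
      rcases hts hs with rfl | ⟨B, hB, rfl⟩
      · exact haA
      · intro haB
        exact haU ⟨B, ⟨hB, hs⟩, haB⟩
    have hne : (Filter.generate 𝒮).NeBot := by
      rw [Filter.generate_neBot_iff]
      exact hfip
    haveI := hne
    set U : Ultrafilter X := Ultrafilter.of (Filter.generate 𝒮) with hU
    have hAU : A ∈ U :=
      Ultrafilter.of_le (Filter.generate 𝒮)
        (Filter.mem_generate_of_mem (Set.mem_insert _ _))
    have hle : p ≤ ⨅ B ∈ U, c B x := by
      refine le_iInf fun B => le_iInf fun hB => ?_
      by_contra h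
      have hBc : Bᶜ ∈ U :=
        Ultrafilter.of_le (Filter.generate 𝒮)
          (Filter.mem_generate_of_mem (Set.mem_insert_of_mem _ ⟨B, h, rfl⟩))
      exact (Ultrafilter.compl_notMem_iff.mpr hB) hBc
    exact le_iSup_of_le U (le_iSup_of_le hAU hle)
  · refine iSup_le fun F => iSup_le fun hA => ?_
    exact iInf₂_le A hA
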